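/- arXiv:1808.01125 — 6 statements merged into one kernel-verified Lean document; each statement's English description precedes it below -/
import Mathlib

section
/- For all r ∈ (0,1), 8 sin²(rπ/2) > 9 sin²(rπ/3). -/
open Real

theorem stmt_6 (r : ℝ) (hr0 : 0 < r) (hr1 : r < 1) :
    8 * (Real.sin (r * π / 2))^2 > 9 * (Real.sin (r * π / 3))^2 := by
  have hπ := Real.pi_pos
  have h2 : r * π / 2 = 3 * (r * π / 6) := by ring
  have h3 : r * π / 3 = 2 * (r * π / 6) := by ring
  rw [h2, h3, Real.sin_three_mul, Real.sin_two_mul]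
  set s := Real.sin (r * π / 6) with hs_def
  set c := Real.cos (r * π / 6) with hc_def
  have hs0 : 0 < s := Real.sin_pos_of_pos_of_lt_pi (by positivity) (by nlinarith)
  have hmem1 : r * π / 6 ∈ Set.Icc (-(π/2)) (π/2) := by
    constructor <;> nlinarith
  have hmem2 : (π/6 : ℝ) ∈ Set.Icc (-(π/2)) (π/2) := by
    constructor <;> nlinarith
  have hlt : r * π / 6 < π / 6 := by nlinarith
  have hs : s < 1/2 := by
    have := Real.strictMonoOn_sin hmem1 hmem2 hlt
    rwa [Real.sin_pi_div_six] at this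
  have pyth : s^2 + c^2 = 1 := Real.sin_sq_add_cos_sq _
  have hu : s^2 < 1/4 := by nlinarith
  nlinarith [mul_pos hs0 hs0, mul_pos (by linarith : (0:ℝ) < 1/4 - s^2)
    (by linarith : (0:ℝ) < 124 - 128*s^2), mul_pos (mul_pos hs0 hs0)
    (mul_pos (by linarith : (0:ℝ) < 1/4 - s^2) (by linarith : (0:ℝ) < 124 - 128*s^2))]
end

section
/- For r ∈ (0,1), the sequence M ↦ (4M²/(rπ²(M-1)²)) sin²((M-1)rπ/(2M)), M ≥ 2, is strictly decreasing and converges to (4/(rπ²)) sin²(rπ/2). -/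
open Real Filter

lemma sin_div_strictAntiOn : StrictAntiOn (fun t : ℝ => Real.sin t / t) (Set.Ioo 0 (π/2)) := by
  apply strictAntiOn_of_deriv_neg (convex_Ioo 0 (π/2))
  · exact ContinuousOn.div Real.continuous_sin.continuousOn continuousOn_id
      (fun x hx => ne_of_gt hx.1)
  · intro x hx
    rw [interior_Ioo] at hx
    have hx0 : x ≠ 0 := ne_of_gt hx.1
    have hd : HasDerivAt (fun t : ℝ => Real.sin t / t)
        ((Real.cos x * x - Real.sin x * 1) / x ^ 2) x :=
      (Real.hasDerivAt_sin x).div (hasDerivAt_id x) hx0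
    rw [hd.deriv]
    have hcos : 0 < Real.cos x := Real.cos_pos_of_mem_Ioo ⟨by linarith [hx.1, Real.pi_pos], hx.2⟩
    have htan : x < Real.tan x := Real.lt_tan hx.1 hx.2
    rw [Real.tan_eq_sin_div_cos, lt_div_iff₀ hcos] at htan
    apply div_neg_of_neg_of_pos
    · nlinarith
    · positivity

theorem stmt_9 (r : ℝ) (hr0 : 0 < r) (hr1 : r < 1) :
    StrictAntiOn
      (fun M : ℕ =>
        4 * (M : ℝ)^2 / (r * π^2 * ((M : ℝ) - 1)^2) *
          (Real.sin (((M : ℝ) - 1) * r * π / (2 * M)))^2)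
      (Set.Ici 2) ∧
    Filter.Tendsto
      (fun M : ℕ =>
        4 * (M : ℝ)^2 / (r * π^2 * ((M : ℝ) - 1)^2) *
          (Real.sin (((M : ℝ) - 1) * r * π / (2 * M)))^2)
      Filter.atTop (nhds (4 / (r * π^2) * (Real.sin (r * π / 2))^2)) := by
  have hπ : 0 < π := Real.pi_pos
  set g : ℝ → ℝ := fun t => r * (Real.sin t / t) ^ 2 with hg
  set τ : ℕ → ℝ := fun M => ((M : ℝ) - 1) * r * π / (2 * M) with hτ
  -- membership of τ M in Ioo 0 (π/2)
  have hmem : ∀ M : ℕ, 2 ≤ M → τ M ∈ Set.Ioo 0 (π/2) := by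
    intro M hM
    have hM2 : (2 : ℝ) ≤ M := by exact_mod_cast hM
    constructor
    · apply div_pos
      · have := mul_pos (mul_pos (show (0:ℝ) < (M:ℝ) - 1 by linarith) hr0) hπ
        linarith
      · linarith
    · rw [div_lt_div_iff₀ (by linarith) two_pos]
      have hlt : ((M:ℝ) - 1) * r < (M : ℝ) := by nlinarith
      nlinarith [mul_lt_mul_of_pos_right hlt hπ]
  -- key rewriting
  have key : ∀ M : ℕ, 2 ≤ M →
      4 * (M : ℝ)^2 / (r * π^2 * ((M : ℝ) - 1)^2) *
        (Real.sin (((M : ℝ) - 1) * r * π / (2 * M)))^2 = g (τ M) := by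
    intro M hM
    have hM2 : (2 : ℝ) ≤ M := by exact_mod_cast hM
    have h1 : ((M : ℝ) - 1) ≠ 0 := by linarith
    have h2 : (M : ℝ) ≠ 0 := by linarith
    simp only [hg, hτ]
    rw [div_pow]
    field_simp
    ring
  -- strict monotonicity of τ
  have hτmono : ∀ M ∈ Set.Ici 2, ∀ N ∈ Set.Ici 2, M < N → τ M < τ N := by
    intro M hM N hN hMN
    have hM2 : (2 : ℝ) ≤ M := by exact_mod_cast hM
    have hN2 : (2 : ℝ) ≤ N := by exact_mod_cast hN
    have hMN' : (M : ℝ) < N := by exact_mod_cast hMN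
    simp only [hτ]
    rw [div_lt_div_iff₀ (by linarith) (by linarith)]
    nlinarith [mul_pos (mul_pos hr0 hπ) (show (0:ℝ) < (N:ℝ) - M by linarith)]
  -- g strictly anti on Ioo 0 (π/2)
  have hganti : StrictAntiOn g (Set.Ioo 0 (π/2)) := by
    intro a ha b hb hab
    have h1 : Real.sin b / b < Real.sin a / a := sin_div_strictAntiOn ha hb hab
    have h2 : 0 < Real.sin b / b := by
      apply div_pos _ hb.1
      exact Real.sin_pos_of_pos_of_lt_pi hb.1 (by linarith [hb.2])
    have h3 : (Real.sin b / b) ^ 2 < (Real.sin a / a) ^ 2 :=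
      pow_lt_pow_left₀ h1 h2.le (by norm_num)
    exact mul_lt_mul_of_pos_left h3 hr0
  constructor
  · intro M hM N hN hMN
    have h := hganti (hmem M hM) (hmem N hN) (hτmono M hM N hN hMN)
    rw [← key M hM, ← key N hN] at h
    exact h
  · -- limit part
    have hne : r * π / 2 ≠ 0 := by positivity
    have hτtend : Tendsto τ atTop (nhds (r * π / 2)) := by
      have heq : ∀ᶠ M : ℕ in atTop, (1 - ((M : ℝ))⁻¹) * (r * π / 2) = τ M := by
        filter_upwards [eventually_ge_atTop 1] with M hM
        have h2 : (M : ℝ) ≠ 0 := by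
          have : (1 : ℝ) ≤ M := by exact_mod_cast hM
          linarith
        simp only [hτ]
        field_simp
      have h0 : Tendsto (fun M : ℕ => (1 - ((M : ℝ))⁻¹) * (r * π / 2)) atTop
          (nhds ((1 - 0) * (r * π / 2))) := by
        apply Tendsto.mul_const
        exact tendsto_const_nhds.sub (tendsto_inv_atTop_zero.comp tendsto_natCast_atTop_atTop)
      rw [show (1 - (0:ℝ)) * (r * π / 2) = r * π / 2 by ring] at h0
      exact h0.congr' heq
    have hgc : ContinuousAt g (r * π / 2) := by
      apply ContinuousAt.mul continuousAt_const
      exact (ContinuousAt.div Real.continuous_sin.continuousAt continuousAt_id hne).pow 2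
    have hcomp := hgc.tendsto.comp hτtend
    have hval : g (r * π / 2) = 4 / (r * π^2) * (Real.sin (r * π / 2))^2 := by
      simp only [hg]
      rw [div_pow]
      have : r * π ^ 2 ≠ 0 := by positivity
      field_simp
      ring
    rw [hval] at hcomp
    apply hcomp.congr'
    filter_upwards [eventually_ge_atTop 2] with M hM
    exact (key M hM).symm
end

section
/- Let H be a Hilbert space and f₁,…,f_M and g₁,…,g_M two linearly independent families in H, with spans F and G. Then H = F ⊕ G^⊥ if and only if the M×M Gram-type matrix [(g_i, f_j)_H] is invertible. -/
open RealInnerProductSpace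

theorem stmt_15 {H : Type*} [NormedAddCommGroup H] [InnerProductSpace ℝ H]
    (M : ℕ) (f g : Fin M → H)
    (hf : LinearIndependent ℝ f) (hg : LinearIndependent ℝ g) :
    IsCompl (Submodule.span ℝ (Set.range f)) (Submodule.span ℝ (Set.range g))ᗮ
      ↔ IsUnit (Matrix.of fun i j : Fin M => ⟪g i, f j⟫) := by
  set F := Submodule.span ℝ (Set.range f) with hF
  set G := Submodule.span ℝ (Set.range g) with hG
  set A : Matrix (Fin M) (Fin M) ℝ := Matrix.of fun i j : Fin M => ⟪g i, f j⟫ with hA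
  haveI : FiniteDimensional ℝ F := FiniteDimensional.span_of_finite ℝ (Set.finite_range f)
  haveI : FiniteDimensional ℝ G := FiniteDimensional.span_of_finite ℝ (Set.finite_range g)
  -- membership in Gᗮ via the generators
  have mem_orth : ∀ x : H, x ∈ Gᗮ ↔ ∀ i, ⟪g i, x⟫ = 0 := by
    intro x
    rw [Submodule.mem_orthogonal]
    constructor
    · intro h i
      exact h (g i) (Submodule.subset_span ⟨i, rfl⟩)
    · intro h u hu
      induction hu using Submodule.span_induction with
      | mem u hu => obtain ⟨i, rfl⟩ := hu; exact h i
      | zero => simp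
      | add u v _ _ hu hv => rw [inner_add_left, hu, hv, add_zero]
      | smul a u _ hu => rw [real_inner_smul_left, hu, mul_zero]
  -- mulVec description
  have mulVec_eq : ∀ c : Fin M → ℝ, A.mulVec c = 0 ↔ (∑ j, c j • f j) ∈ Gᗮ := by
    intro c
    rw [mem_orth, funext_iff]
    refine forall_congr' fun i => ?_
    rw [inner_sum]
    simp only [real_inner_smul_right, Matrix.mulVec, dotProduct, hA, Matrix.of_apply,
      Pi.zero_apply]
    rw [Finset.sum_congr rfl fun j _ => mul_comm (c j) _]
  -- Disjoint ↔ IsUnit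
  have key : Disjoint F Gᗮ ↔ IsUnit A := by
    rw [← Matrix.mulVec_injective_iff_isUnit]
    constructor
    · intro hd
      have hker : ∀ c : Fin M → ℝ, A.mulVec c = 0 → c = 0 := by
        intro c hc
        have hx : (∑ j, c j • f j) ∈ F ⊓ Gᗮ :=
          ⟨Submodule.sum_mem _ fun j _ => Submodule.smul_mem _ _ (Submodule.subset_span ⟨j, rfl⟩),
            (mulVec_eq c).1 hc⟩
        have hx0 : (∑ j, c j • f j) = 0 :=
          Submodule.disjoint_def.1 hd _ hx.1 hx.2
        exact Fintype.linearIndependent_iff.1 hf c hx0 |> funext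
      intro c₁ c₂ hcc
      have : A.mulVec (c₁ - c₂) = 0 := by
        rw [Matrix.mulVec_sub, hcc, sub_self]
      exact sub_eq_zero.1 (hker _ this)
    · intro h
      rw [Submodule.disjoint_def]
      intro x hxF hxO
      obtain ⟨c, rfl⟩ := (Submodule.mem_span_range_iff_exists_fun ℝ).1 hxF
      have hc0 : c = 0 := by
        have := h (a₁ := c) (a₂ := 0) (by rw [(mulVec_eq c).2 hxO, Matrix.mulVec_zero])
        exact this
      simp [hc0]
  rw [← key]
  constructor
  · exact fun h => h.disjoint
  · intro hd
    refine ⟨hd, ?_⟩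
    -- codisjoint via projection
    let φ : F →ₗ[ℝ] G := (G.orthogonalProjectionOnto).toLinearMap.comp F.subtype
    have hinj : Function.Injective φ := by
      rw [← LinearMap.ker_eq_bot, Submodule.eq_bot_iff]
      rintro ⟨x, hxF⟩ hx
      have hx0 : G.orthogonalProjectionOnto x = 0 := hx
      have hxO : x ∈ Gᗮ := Submodule.orthogonalProjectionOnto_eq_zero_iff.1 hx0
      have : x = 0 := (Submodule.disjoint_def.1 hd) x hxF hxO
      exact Subtype.ext this
    have hfr : Module.finrank ℝ F = Module.finrank ℝ G := by
      rw [hF, hG, finrank_span_eq_card hf, finrank_span_eq_card hg]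
    have hsurj : Function.Surjective φ :=
      (LinearMap.injective_iff_surjective_of_finrank_eq_finrank hfr).1 hinj
    rw [codisjoint_iff, eq_top_iff, ← Submodule.sup_orthogonal_of_hasOrthogonalProjection (K := G)]
    refine sup_le ?_ le_sup_right
    intro y hyG
    obtain ⟨⟨x, hxF⟩, hxy⟩ := hsurj ⟨y, hyG⟩
    have hproj : (G.orthogonalProjectionOnto x : H) = y := congrArg Subtype.val hxy
    have hsub : y - x ∈ Gᗮ := by
      rw [show y - x = -(x - y) by abel]
      refine Submodule.neg_mem _ ?_
      rw [← hproj]; exact Submodule.sub_starProjection_mem_orthogonal (K := G) x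
    rw [Submodule.mem_sup]
    exact ⟨x, hxF, y - x, hsub, by abel⟩
end

section
/- Let H = F ⊕ G^⊥ with F, G spanned by orthonormal families 𝔣 = (f₁,…,f_M) and 𝔤 = (g₁,…,g_M) respectively. Then the squared operator norm of the oblique projection P_F^{G^⊥} equals the reciprocal of the smallest eigenvalue of the matrix [(g_i,f_j)_H][(f_i,g_j)_H]. -/
open RealInnerProductSpace

open Matrix in
private lemma aux_dot {M : ℕ} (A : Matrix (Fin M) (Fin M) ℝ) (c : Fin M → ℝ) :
    (A *ᵥ c) ⬝ᵥ (A *ᵥ c) = c ⬝ᵥ ((Aᵀ * A) *ᵥ c) := by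
  rw [← Matrix.mulVec_mulVec, Matrix.dotProduct_mulVec c, Matrix.vecMul_transpose]

open Matrix in
private lemma aux_rayleigh {M : ℕ} {S : Matrix (Fin M) (Fin M) ℝ} (hS : S.IsHermitian)
    {θ : ℝ} (hev : ∀ i, θ ≤ hS.eigenvalues i) (c : Fin M → ℝ) :
    θ * (c ⬝ᵥ c) ≤ c ⬝ᵥ (S *ᵥ c) := by
  classical
  set U : Matrix (Fin M) (Fin M) ℝ := (hS.eigenvectorUnitary : Matrix (Fin M) (Fin M) ℝ) with hU
  have hUU : U * star U = 1 := (Matrix.mem_unitaryGroup_iff).mp hS.eigenvectorUnitary.2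
  have hstar : star U = Uᵀ := by
    rw [Matrix.star_eq_conjTranspose, Matrix.conjTranspose_eq_transpose_of_trivial]
  set d : Fin M → ℝ := Uᵀ *ᵥ c with hd
  have key : ∀ w : Fin M → ℝ, c ⬝ᵥ (U *ᵥ w) = d ⬝ᵥ w := by
    intro w
    rw [hd, Matrix.mulVec_transpose, Matrix.dotProduct_mulVec]
  have hcc : c ⬝ᵥ c = d ⬝ᵥ d := by
    have := key d
    rw [hd] at this ⊢
    rw [← this, Matrix.mulVec_mulVec, ← hstar, hUU, Matrix.one_mulVec]
  have hspec := hS.spectral_theorem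
  rw [Unitary.conjStarAlgAut_apply, ← hU, hstar] at hspec
  calc θ * (c ⬝ᵥ c) = ∑ i, θ * (d i)^2 := by
        rw [hcc, dotProduct, Finset.mul_sum]
        congr 1; ext i; ring
    _ ≤ ∑ i, hS.eigenvalues i * (d i)^2 := by
        apply Finset.sum_le_sum
        intro i _
        exact mul_le_mul_of_nonneg_right (hev i) (sq_nonneg _)
    _ = c ⬝ᵥ (S *ᵥ c) := by
        conv_rhs => rw [hspec]
        rw [← Matrix.mulVec_mulVec, ← Matrix.mulVec_mulVec, ← hd, key]
        rw [dotProduct]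
        congr 1; ext i
        rw [Matrix.mulVec_diagonal]
        simp
        ring

private lemma aux_inner_sum {H : Type*} [NormedAddCommGroup H] [InnerProductSpace ℝ H] {M : ℕ}
    {e : Fin M → H} (he : Orthonormal ℝ e) (v : Fin M → ℝ) (i : Fin M) :
    ⟪e i, ∑ j, v j • e j⟫ = v i := by
  rw [inner_sum]
  simp [real_inner_smul_right, orthonormal_iff_ite.mp he]

private lemma aux_norm_sum {H : Type*} [NormedAddCommGroup H] [InnerProductSpace ℝ H] {M : ℕ}
    {e : Fin M → H} (he : Orthonormal ℝ e) (v : Fin M → ℝ) :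
    ‖∑ j, v j • e j‖^2 = dotProduct v v := by
  rw [← real_inner_self_eq_norm_sq, sum_inner]
  simp only [real_inner_smul_left, aux_inner_sum he]
  rfl

open Matrix in
theorem stmt_16 {H : Type*} [NormedAddCommGroup H] [InnerProductSpace ℝ H]
    (M : ℕ) (f g : Fin M → H)
    (hf : Orthonormal ℝ f) (hg : Orthonormal ℝ g)
    (hcompl : IsCompl (Submodule.span ℝ (Set.range f))
        (Submodule.span ℝ (Set.range g))ᗮ)
    (P : H →L[ℝ] H)
    (hP : ∀ x : H, P x ∈ Submodule.span ℝ (Set.range f) ∧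
        x - P x ∈ (Submodule.span ℝ (Set.range g))ᗮ)
    (θ : ℝ)
    (hθ : IsLeast {t : ℝ | Module.End.HasEigenvalue
        (Matrix.toLin' ((Matrix.of fun i j : Fin M => ⟪g i, f j⟫) *
          (Matrix.of fun i j : Fin M => ⟪f i, g j⟫))) t} θ) :
    ‖P‖^2 = 1 / θ := by
  classical
  set B : Matrix (Fin M) (Fin M) ℝ := Matrix.of (fun i j : Fin M => ⟪g i, f j⟫) with hB
  have hBt : (Matrix.of fun i j : Fin M => (⟪f i, g j⟫ : ℝ)) = Bᵀ := by
    ext i j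
    simp only [hB, Matrix.of_apply, Matrix.transpose_apply]
    exact real_inner_comm _ _
  rw [hBt] at hθ
  -- representation of elements of span f
  have hfrepr : ∀ y ∈ Submodule.span ℝ (Set.range f), (∑ j, (⟪f j, y⟫ : ℝ) • f j) = y := by
    intro y hy
    induction hy using Submodule.span_induction with
    | mem x hx =>
      obtain ⟨k, rfl⟩ := hx
      simp [orthonormal_iff_ite.mp hf]
    | zero => simp
    | add a b _ _ ha hb =>
      simp only [inner_add_right, add_smul, Finset.sum_add_distrib, ha, hb]
    | smul r a _ ha =>
      simp only [real_inner_smul_right, mul_smul, ← Finset.smul_sum, ha]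
  -- kernel of Bᵀ is trivial
  have hBtker : ∀ v : Fin M → ℝ, Bᵀ *ᵥ v = 0 → v = 0 := by
    intro v hv
    set x : H := ∑ i, v i • g i with hx
    have hxf : ∀ j, (⟪x, f j⟫ : ℝ) = 0 := by
      intro j
      have h0 := congrFun hv j
      simp only [Matrix.mulVec, dotProduct, Matrix.transpose_apply, hB,
        Matrix.of_apply, Pi.zero_apply] at h0
      rw [hx, sum_inner]
      simpa [real_inner_smul_left, mul_comm] using h0
    have hxFperp : x ∈ (Submodule.span ℝ (Set.range f))ᗮ := by
      rw [Submodule.mem_orthogonal]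
      intro u hu
      induction hu using Submodule.span_induction with
      | mem u hu =>
        obtain ⟨j, rfl⟩ := hu
        rw [real_inner_comm]; exact hxf j
      | zero => simp
      | add a b _ _ ha hb => rw [inner_add_left, ha, hb, add_zero]
      | smul r a _ ha => rw [real_inner_smul_left, ha, mul_zero]
    have hxG : x ∈ ((Submodule.span ℝ (Set.range g))ᗮ)ᗮ :=
      Submodule.le_orthogonal_orthogonal _
        (Submodule.sum_smul_mem _ v (fun i _ => Submodule.subset_span ⟨i, rfl⟩))
    have hmem : x ∈ (Submodule.span ℝ (Set.range f) ⊔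
        (Submodule.span ℝ (Set.range g))ᗮ)ᗮ := by
      rw [← Submodule.inf_orthogonal]
      exact ⟨hxFperp, hxG⟩
    rw [codisjoint_iff.mp hcompl.codisjoint, Submodule.top_orthogonal_eq_bot,
      Submodule.mem_bot] at hmem
    funext i
    have := aux_inner_sum hg v i
    rw [← hx, hmem, inner_zero_right] at this
    exact this.symm
  have hBunit : IsUnit B := by
    rw [← Matrix.isUnit_transpose]
    rw [← Matrix.mulVec_injective_iff_isUnit]
    intro a b hab
    have := hBtker (a - b) (by rw [Matrix.mulVec_sub, hab, sub_self])
    exact sub_eq_zero.mp this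
  have hBinj : Function.Injective (B.mulVec) := Matrix.mulVec_injective_iff_isUnit.mpr hBunit
  -- BᵀB is hermitian, its eigenvalues bounded below by θ
  have hS' : (Bᵀ * B).IsHermitian := by
    have h := Matrix.isHermitian_conjTranspose_mul_self B
    rwa [Matrix.conjTranspose_eq_transpose_of_trivial] at h
  have hbd : ∀ i, θ ≤ hS'.eigenvalues i := by
    intro i
    have hw := hS'.mulVec_eigenvectorBasis i
    have hwne : ⇑(hS'.eigenvectorBasis i) ≠ (0 : Fin M → ℝ) := by
      have h0 := hS'.eigenvectorBasis.orthonormal.ne_zero i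
      intro hc
      exact h0 (by ext j; exact congrFun hc j)
    apply hθ.2
    refine Module.End.hasEigenvalue_of_hasEigenvector
      (x := B *ᵥ ⇑(hS'.eigenvectorBasis i)) ⟨?_, ?_⟩
    · rw [Module.End.mem_eigenspace_iff, Matrix.toLin'_apply, Matrix.mulVec_mulVec,
        mul_assoc, ← Matrix.mulVec_mulVec, hw, Matrix.mulVec_smul]
    · intro hc
      exact hwne (hBinj (by rw [hc, Matrix.mulVec_zero]))
  -- coefficients of P x
  have hcoef : ∀ x : H, ∀ i, (B *ᵥ (fun j => (⟪f j, P x⟫ : ℝ))) i = ⟪g i, x⟫ := by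
    intro x i
    have hPx : P x = ∑ j, (⟪f j, P x⟫ : ℝ) • f j := (hfrepr _ (hP x).1).symm
    have h1 : (B *ᵥ (fun j => (⟪f j, P x⟫ : ℝ))) i = ⟪g i, P x⟫ := by
      conv_rhs => rw [hPx]
      rw [inner_sum]
      simp only [Matrix.mulVec, dotProduct, hB, Matrix.of_apply, real_inner_smul_right]
      congr 1; ext j; ring
    have h2 : (⟪g i, x - P x⟫ : ℝ) = 0 :=
      Submodule.inner_right_of_mem_orthogonal (Submodule.subset_span (Set.mem_range_self i)) (hP x).2
    rw [inner_sub_right] at h2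
    rw [h1]; linarith
  -- upper bound
  have hub : ∀ x : H, θ * ‖P x‖^2 ≤ ‖x‖^2 := by
    intro x
    set c : Fin M → ℝ := fun j => (⟪f j, P x⟫ : ℝ) with hc
    have hPx : P x = ∑ j, c j • f j := (hfrepr _ (hP x).1).symm
    have hnorm : ‖P x‖^2 = dotProduct c c := by rw [hPx]; exact aux_norm_sum hf c
    have h1 : θ * dotProduct c c ≤ dotProduct c ((Bᵀ * B) *ᵥ c) :=
      aux_rayleigh hS' hbd c
    have h2 : dotProduct c ((Bᵀ * B) *ᵥ c) = ∑ i, (⟪g i, x⟫ : ℝ)^2 := by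
      rw [← aux_dot B c]
      rw [dotProduct]
      congr 1; ext i
      rw [hcoef x i, sq]
    have h4 : ∑ i, (⟪g i, x⟫ : ℝ)^2 ≤ ‖x‖^2 := by
      simpa [Real.norm_eq_abs, sq_abs] using
        hg.sum_inner_products_le (s := Finset.univ) x
    rw [hnorm]; linarith
  -- eigenvector for θ
  obtain ⟨v, hv⟩ := hθ.1.exists_hasEigenvector
  have hv1 : (B * Bᵀ) *ᵥ v = θ • v := by
    have := hv.apply_eq_smul
    rwa [Matrix.toLin'_apply] at this
  have hvne : v ≠ 0 := hv.2
  have hvv : 0 < dotProduct v v := by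
    have hnn : 0 ≤ dotProduct v v :=
      Finset.sum_nonneg fun i _ => mul_self_nonneg _
    have hne : dotProduct v v ≠ 0 :=
      fun h => hvne (dotProduct_self_eq_zero.mp h)
    exact lt_of_le_of_ne hnn (Ne.symm hne)
  have hdot : (Bᵀ *ᵥ v) ⬝ᵥ (Bᵀ *ᵥ v) = θ * dotProduct v v := by
    rw [aux_dot Bᵀ v, Matrix.transpose_transpose, hv1, dotProduct_smul, smul_eq_mul]
  have hθpos : 0 < θ := by
    have hnn : 0 ≤ (Bᵀ *ᵥ v) ⬝ᵥ (Bᵀ *ᵥ v) :=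
      Finset.sum_nonneg fun i _ => mul_self_nonneg _
    have hθ0 : 0 ≤ θ := by nlinarith
    rcases hθ0.lt_or_eq with h | h
    · exact h
    · exfalso
      rw [← h, zero_mul] at hdot
      have := dotProduct_self_eq_zero.mp hdot
      exact hvne (hBtker v this)
  -- attainment
  set x₀ : H := ∑ i, v i • g i with hx₀
  set c₀ : Fin M → ℝ := fun j => (⟪f j, P x₀⟫ : ℝ) with hc₀def
  have hBc₀ : B *ᵥ c₀ = v := by
    funext i
    rw [hc₀def, hcoef x₀ i, hx₀, aux_inner_sum hg]
  have hc₀ : c₀ = (1/θ) • (Bᵀ *ᵥ v) := by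
    apply hBinj
    rw [hBc₀, Matrix.mulVec_smul, Matrix.mulVec_mulVec, hv1, smul_smul,
      one_div_mul_cancel (ne_of_gt hθpos), one_smul]
  have hnormx₀ : ‖x₀‖^2 = dotProduct v v := aux_norm_sum hg v
  have hPx₀ : ‖P x₀‖^2 = (1/θ) * ‖x₀‖^2 := by
    have hrepr : P x₀ = ∑ j, c₀ j • f j := (hfrepr _ (hP x₀).1).symm
    rw [hrepr, aux_norm_sum hf, hc₀, smul_dotProduct, dotProduct_smul,
      smul_eq_mul, smul_eq_mul, hdot, hnormx₀]
    field_simp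
  have hx₀pos : 0 < ‖x₀‖ := by
    have h2 : 0 < ‖x₀‖^2 := hnormx₀ ▸ hvv
    nlinarith [norm_nonneg x₀]
  have hinv_nn : (0:ℝ) ≤ 1/θ := by positivity
  -- conclude
  have hPnorm : ‖P‖ = Real.sqrt (1/θ) := by
    apply le_antisymm
    · apply P.opNorm_le_bound (Real.sqrt_nonneg _)
      intro x
      have h' : ‖P x‖^2 ≤ (Real.sqrt (1/θ) * ‖x‖)^2 := by
        rw [mul_pow, Real.sq_sqrt hinv_nn]
        rw [one_div, inv_mul_eq_div, le_div_iff₀ hθpos]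
        nlinarith [hub x]
      calc ‖P x‖ = Real.sqrt (‖P x‖^2) := (Real.sqrt_sq (norm_nonneg _)).symm
        _ ≤ Real.sqrt ((Real.sqrt (1/θ) * ‖x‖)^2) := Real.sqrt_le_sqrt h'
        _ = Real.sqrt (1/θ) * ‖x‖ := Real.sqrt_sq (by positivity)
    · have h := P.le_opNorm x₀
      have heq : ‖P x₀‖ = Real.sqrt (1/θ) * ‖x₀‖ := by
        rw [← Real.sqrt_sq (norm_nonneg (P x₀)), hPx₀, Real.sqrt_mul hinv_nn,
          Real.sqrt_sq (norm_nonneg _)]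
      rw [heq] at h
      exact le_of_mul_le_mul_right h hx₀pos
  rw [hPnorm, Real.sq_sqrt hinv_nn]
end

section
/- Let c₁,…,c_M be pairwise distinct points in (0,π). Then the M×M matrix Ξ with entries Ξ_{ij} = sin(i c_j) is invertible. -/
open Real Polynomial Polynomial.Chebyshev

lemma U_deg_lead : ∀ n : ℕ, (U ℝ n).natDegree = n ∧ (U ℝ n).leadingCoeff = 2 ^ n := by
  intro n
  induction n using Nat.twoStepInduction with
  | zero => simp [U_zero]
  | one => constructor <;> simp [U_one, leadingCoeff]
  | more n ih1 ih2 =>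
    have h : U ℝ ((n+2:ℕ)) = 2 * X * U ℝ ((n+1:ℕ)) - U ℝ n := by
      have := U_add_two ℝ n
      push_cast at this ⊢
      convert this using 3
    have hUne : (U ℝ ((n+1:ℕ)) : ℝ[X]) ≠ 0 := by
      intro h0
      have := ih2.2
      rw [h0, leadingCoeff_zero] at this
      exact absurd this.symm (by positivity)
    have hlead : (2 * X * U ℝ ((n+1:ℕ)) : ℝ[X]).leadingCoeff = 2 ^ (n + 2) := by
      rw [leadingCoeff_mul, leadingCoeff_mul, ih2.2]
      simp [leadingCoeff, pow_succ]; ring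
    have hdeg : (2 * X * U ℝ ((n+1:ℕ)) : ℝ[X]).natDegree = n + 2 := by
      rw [natDegree_mul (by simp [mul_ne_zero]) hUne, natDegree_mul (by norm_num) X_ne_zero, ih2.1]
      simp; ring
    have h2 : (2 * X * U ℝ ((n+1:ℕ)) : ℝ[X]) ≠ 0 :=
      leadingCoeff_ne_zero.mp (by rw [hlead]; positivity)
    have hlt : (U ℝ (n:ℕ)).degree < (2 * X * U ℝ ((n+1:ℕ)) : ℝ[X]).degree := by
      rw [degree_eq_natDegree h2, hdeg]
      calc (U ℝ (n:ℕ)).degree ≤ ((U ℝ (n:ℕ)).natDegree : WithBot ℕ) := degree_le_natDegree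
        _ = (n : WithBot ℕ) := by rw [ih1.1]
        _ < ((n+2 : ℕ) : WithBot ℕ) := by exact_mod_cast Nat.lt_add_of_pos_right (by norm_num)
    refine ⟨?_, ?_⟩
    · rw [h, natDegree_sub_eq_left_of_natDegree_lt, hdeg]
      rw [hdeg, ih1.1]; omega
    · rw [h, leadingCoeff_sub_of_degree_lt hlt, hlead]

theorem stmt_17 (M : ℕ) (c : Fin M → ℝ) (hc : Function.Injective c)
    (hmem : ∀ j, c j ∈ Set.Ioo (0 : ℝ) π) :
    IsUnit (Matrix.of fun i j : Fin M => Real.sin (((i : ℕ) + 1 : ℝ) * c j)) := by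
  set x : Fin M → ℝ := fun j => Real.cos (c j) with hx
  have hxinj : Function.Injective x := by
    intro j k hjk
    apply hc
    exact Real.injOn_cos (Set.mem_Icc.mpr ⟨(hmem j).1.le, (hmem j).2.le⟩)
      (Set.mem_Icc.mpr ⟨(hmem k).1.le, (hmem k).2.le⟩) hjk
  set p : Fin M → ℝ[X] := fun i => C (((2:ℝ)^(i:ℕ))⁻¹) * U ℝ (i:ℕ) with hp
  have hpdeg : ∀ i : Fin M, (p i).natDegree = (i:ℕ) := by
    intro i
    rw [hp]
    simp only [natDegree_C_mul (by positivity : ((2:ℝ)^(i:ℕ))⁻¹ ≠ 0)]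
    exact (U_deg_lead i).1
  have hpmonic : ∀ i : Fin M, (p i).Monic := by
    intro i
    rw [Monic, hp]
    simp only [leadingCoeff_mul, leadingCoeff_C, (U_deg_lead (i:ℕ)).2]
    rw [inv_mul_cancel₀ (by positivity)]
  have hfact : (Matrix.of fun i j : Fin M => Real.sin (((i : ℕ) + 1 : ℝ) * c j)) =
      (Matrix.diagonal fun i : Fin M => (2:ℝ)^(i:ℕ)) *
      (Matrix.of fun i j : Fin M => (p j).eval (x i)).transpose *
      (Matrix.diagonal fun j : Fin M => Real.sin (c j)) := by
    ext i j
    simp only [Matrix.mul_diagonal, Matrix.diagonal_mul, Matrix.transpose_apply,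
      Matrix.of_apply, hp, eval_mul, eval_C]
    have := Polynomial.Chebyshev.U_real_cos (c j) (i:ℕ)
    push_cast at this
    rw [← this, hx]
    field_simp
  rw [hfact, Matrix.isUnit_iff_isUnit_det]
  rw [Matrix.det_mul, Matrix.det_mul, Matrix.det_transpose,
    ← Matrix.det_eval_matrixOfPolynomials_eq_det_vandermonde x p hpdeg hpmonic,
    Matrix.det_diagonal, Matrix.det_diagonal]
  rw [isUnit_iff_ne_zero]
  apply mul_ne_zero
  apply mul_ne_zero
  · exact Finset.prod_ne_zero_iff.mpr fun i _ => by positivity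
  · exact Matrix.det_vandermonde_ne_zero_iff.mpr hxinj
  · exact Finset.prod_ne_zero_iff.mpr fun j _ =>
      (Real.sin_pos_of_pos_of_lt_pi (hmem j).1 (hmem j).2).ne'
end

section
/- Let c₁,…,c_M be pairwise distinct points in (0,π). Then the M×M matrix Ξ with entries Ξ_{ij} = cos((i-1) c_j) is invertible. -/
open Real Matrix

open Polynomial in
lemma cheb_deg_coeff (n : ℕ) :
    (Polynomial.Chebyshev.T ℝ n).natDegree ≤ n ∧
    (Polynomial.Chebyshev.T ℝ n).coeff n = 2 ^ (n - 1) := by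
  induction n using Nat.twoStepInduction with
  | zero => simp [Polynomial.Chebyshev.T_zero]
  | one => simp [Polynomial.Chebyshev.T_one]
  | more n ih ih' =>
    obtain ⟨hd, hc⟩ := ih
    obtain ⟨hd', hc'⟩ := ih'
    have hrec : Polynomial.Chebyshev.T ℝ ((n : ℤ) + 2) =
        2 * X * Polynomial.Chebyshev.T ℝ ((n : ℤ) + 1) - Polynomial.Chebyshev.T ℝ n :=
      Polynomial.Chebyshev.T_add_two ℝ n
    have hcast : ((n + 2 : ℕ) : ℤ) = (n : ℤ) + 2 := by push_cast; ring
    have hcast1 : ((n + 1 : ℕ) : ℤ) = (n : ℤ) + 1 := by push_cast; ring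
    rw [hcast, hrec]
    constructor
    · refine le_trans (Polynomial.natDegree_sub_le _ _) ?_
      refine max_le ?_ (hd.trans (by omega))
      calc (2 * X * Polynomial.Chebyshev.T ℝ ((n:ℤ)+1)).natDegree
          ≤ (2 * X : ℝ[X]).natDegree + (Polynomial.Chebyshev.T ℝ ((n:ℤ)+1)).natDegree :=
            Polynomial.natDegree_mul_le
        _ ≤ 1 + (n + 1) := by
            have h1 : (2 * X : ℝ[X]).natDegree ≤ 1 := by
              refine le_trans Polynomial.natDegree_mul_le ?_
              simp
            rw [← hcast1]
            omega
        _ = n + 2 := by ring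
    · have hz : (Polynomial.Chebyshev.T ℝ n).coeff (n + 2) = 0 :=
        Polynomial.coeff_eq_zero_of_natDegree_lt (by omega)
      have h2 : (2 * X * Polynomial.Chebyshev.T ℝ ((n:ℤ)+1) : ℝ[X]) =
          Polynomial.C 2 * (X * Polynomial.Chebyshev.T ℝ ((n:ℤ)+1)) := by
        rw [← mul_assoc]
        norm_num
        left
        exact (map_ofNat Polynomial.C 2).symm
      rw [Polynomial.coeff_sub, hz, sub_zero, h2, Polynomial.coeff_C_mul,
        Polynomial.coeff_X_mul, ← hcast1, hc']
      rw [show n + 2 - 1 = (n + 1 - 1) + 1 by omega, pow_succ]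
      ring

theorem stmt_18 (M : ℕ) (c : Fin M → ℝ) (hc : Function.Injective c)
    (hmem : ∀ j, c j ∈ Set.Ioo (0 : ℝ) π) :
    IsUnit (Matrix.of fun i j : Fin M => Real.cos ((i : ℕ) * c j)) := by
  set x : Fin M → ℝ := fun j => Real.cos (c j) with hxdef
  have hx : Function.Injective x := by
    intro a b hab
    apply hc
    exact Real.injOn_cos ⟨(hmem a).1.le, (hmem a).2.le⟩ ⟨(hmem b).1.le, (hmem b).2.le⟩ hab
  set p : Fin M → Polynomial ℝ := fun i => Polynomial.Chebyshev.T ℝ (i : ℕ) with hpdef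
  have h_deg : ∀ i : Fin M, (p i).natDegree ≤ (i : ℕ) := fun i => (cheb_deg_coeff i).1
  have hmat : (Matrix.of fun i j : Fin M => Real.cos ((i : ℕ) * c j)) =
      (Matrix.of (fun i j : Fin M => (p j).eval (x i)))ᵀ := by
    ext i j
    show Real.cos ((i : ℕ) * c j) = (p i).eval (x j)
    simp only [hpdef, hxdef]
    rw [Polynomial.Chebyshev.T_real_cos]
    norm_num
  rw [hmat]
  rw [Matrix.isUnit_iff_isUnit_det, Matrix.det_transpose,
    Matrix.eval_matrixOfPolynomials_eq_vandermonde_mul_matrixOfPolynomials x p h_deg,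
    Matrix.det_mul, isUnit_iff_ne_zero]
  apply mul_ne_zero
  · exact Matrix.det_vandermonde_ne_zero_iff.mpr hx
  · rw [Matrix.det_of_upperTriangular (Matrix.matrixOfPolynomials_blockTriangular p h_deg)]
    apply Finset.prod_ne_zero_iff.mpr
    intro i _
    rw [Matrix.of_apply, hpdef, (cheb_deg_coeff i).2]
    positivity
end
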